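/- Let J_μ(φ) = log∫e^{−φ*} − ∫φ dμ for a probability measure μ with finite first moment, defined on convex functions φ. Then for convex φ₀, φ₁ with φ_{1/2} = (φ₀+φ₁)/2, it holds that J_μ(φ_{1/2}) ≥ (1/2)J_μ(φ₀) + (1/2)J_μ(φ₁); i.e., J_μ is midpoint concave along linear interpolation of convex functions. -/

import Mathlib

open MeasureTheory
open scoped ENNReal

/-- `e^{-φ*(x)}` where `φ*` is the Legendre transform of `φ`, computed in `ℝ≥0∞` as
`inf_y exp(φ(y) - ⟨x,y⟩)`. -/
noncomputable def expNegConj {d : ℕ} (φ : EuclideanSpace ℝ (Fin d) → ℝ)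
    (x : EuclideanSpace ℝ (Fin d)) : ℝ≥0∞ :=
  ⨅ y, ENNReal.ofReal (Real.exp (φ y - (inner ℝ x y : ℝ)))

/-- The functional `J_μ(φ) = log ∫ e^{-φ*} - ∫ φ dμ`. -/
noncomputable def Jfun {d : ℕ} (μ : Measure (EuclideanSpace ℝ (Fin d)))
    (φ : EuclideanSpace ℝ (Fin d) → ℝ) : ℝ :=
  Real.log (∫⁻ x, expNegConj φ x).toReal - ∫ y, φ y ∂μ

open Set

section PLaux

lemma compact_step {K L C : Set ℝ} (hK : IsCompact K) (hL : IsCompact L)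
    (hKne : K.Nonempty) (hLne : L.Nonempty) (hC : MeasurableSet C)
    (hsub : ∀ a ∈ K, ∀ b ∈ L, a + b ∈ C) :
    volume K + volume L ≤ volume C := by
  have hbK := hK.bddAbove
  have hbL := hL.bddBelow
  set s := sSup K with hs
  set t := sInf L with ht
  have hsK : s ∈ K := hK.sSup_mem hKne
  have htL : t ∈ L := hL.sInf_mem hLne
  set U : Set ℝ := (· + (-t)) ⁻¹' K with hU
  set V : Set ℝ := (· + (-s)) ⁻¹' L with hV
  have hUm : MeasurableSet U := hK.measurableSet.preimage (measurable_add_const _)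
  have hVm : MeasurableSet V := hL.measurableSet.preimage (measurable_add_const _)
  have hUC : U ⊆ C := fun x hx => by
    have : (x + -t) + t ∈ C := hsub _ hx _ htL
    simpa using this
  have hVC : V ⊆ C := fun x hx => by
    have : s + (x + -s) ∈ C := hsub _ hsK _ hx
    simpa [add_comm] using this
  have hUV : U ∩ V ⊆ {s + t} := by
    rintro x ⟨hxU, hxV⟩
    have h1 : x + -t ≤ s := le_csSup hbK hxU
    have h2 : t ≤ x + -s := csInf_le hbL hxV
    have : x = s + t := le_antisymm (by linarith) (by linarith)
    simp [this]
  have hvolU : volume U = volume K := measure_preimage_add_right volume (-t) K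
  have hvolV : volume V = volume L := measure_preimage_add_right volume (-s) L
  have hinter : volume (U ∩ V) = 0 :=
    le_antisymm (le_trans (measure_mono hUV) (by simp)) zero_le
  calc volume K + volume L = volume U + volume V := by rw [hvolU, hvolV]
    _ = volume (U ∪ V) + volume (U ∩ V) := (measure_union_add_inter U hVm).symm
    _ = volume (U ∪ V) := by rw [hinter, add_zero]
    _ ≤ volume C := measure_mono (union_subset hUC hVC)

lemma sumset_vol {A B C : Set ℝ} (hA : MeasurableSet A) (hB : MeasurableSet B)
    (hC : MeasurableSet C) (hAne : A.Nonempty) (hBne : B.Nonempty)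
    (hsub : ∀ a ∈ A, ∀ b ∈ B, a + b ∈ C) :
    volume A + volume B ≤ volume C := by
  obtain ⟨a₀, ha₀⟩ := hAne
  obtain ⟨b₀, hb₀⟩ := hBne
  -- infinite cases
  rcases eq_or_ne (volume A) ⊤ with hAtop | hAtop
  · have : (· + (-b₀)) ⁻¹' A ⊆ C := fun x hx => by
      have : (x + -b₀) + b₀ ∈ C := hsub _ hx _ hb₀
      simpa using this
    have : (⊤ : ℝ≥0∞) ≤ volume C := by
      rw [← hAtop, ← measure_preimage_add_right volume (-b₀) A]
      exact measure_mono this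
    simp [top_le_iff.1 this]
  rcases eq_or_ne (volume B) ⊤ with hBtop | hBtop
  · have : (· + (-a₀)) ⁻¹' B ⊆ C := fun x hx => by
      have : a₀ + (x + -a₀) ∈ C := hsub _ ha₀ _ hx
      simpa [add_comm] using this
    have : (⊤ : ℝ≥0∞) ≤ volume C := by
      rw [← hBtop, ← measure_preimage_add_right volume (-a₀) B]
      exact measure_mono this
    simp [top_le_iff.1 this]
  -- finite case: approximate by compacts
  refine ENNReal.le_of_forall_pos_le_add fun ε hε hCfin => ?_
  have hε2 : (0:ℝ≥0∞) < ε / 2 := ENNReal.half_pos (by exact_mod_cast hε.ne')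
  obtain ⟨K, hKA, hKc, hKv⟩ := hA.exists_isCompact_lt_add (μ := volume) hAtop hε2.ne'
  obtain ⟨L, hLB, hLc, hLv⟩ := hB.exists_isCompact_lt_add (μ := volume) hBtop hε2.ne'
  have hstep : volume (K ∪ {a₀}) + volume (L ∪ {b₀}) ≤ volume C := by
    refine compact_step (hKc.union isCompact_singleton) (hLc.union isCompact_singleton)
      (by simp) (by simp) hC ?_
    rintro a (ha | ha) b (hb | hb) <;>
      exact hsub a (by first | exact hKA ha | simp_all | exact hLB hb) b
        (by first | exact hLB hb | simp_all)
  have h1 : volume A ≤ volume (K ∪ {a₀}) + ε / 2 :=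
    le_trans hKv.le (add_le_add_left (measure_mono subset_union_left) _)
  have h2 : volume B ≤ volume (L ∪ {b₀}) + ε / 2 :=
    le_trans hLv.le (add_le_add_left (measure_mono subset_union_left) _)
  calc volume A + volume B ≤ (volume (K ∪ {a₀}) + volume (L ∪ {b₀})) + (ε/2 + ε/2) := by
        calc volume A + volume B ≤ (volume (K ∪ {a₀}) + ε/2) + (volume (L ∪ {b₀}) + ε/2) :=
              add_le_add h1 h2
          _ = _ := by ring
    _ ≤ volume C + ε := by
        rw [ENNReal.add_halves]
        exact add_le_add_left hstep _

lemma amgm (a b : ℝ≥0∞) : a * b ≤ ((a + b) / 2) * ((a + b) / 2) := by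
  rcases eq_or_ne a 0 with rfl | ha0; · simp
  rcases eq_or_ne b 0 with rfl | hb0; · simp
  rcases eq_or_ne a ⊤ with rfl | hat
  · have : (⊤ + b) / 2 = ⊤ := by simp [ENNReal.top_div, ENNReal.add_eq_top]
    rw [this]; simp [ENNReal.top_mul, hb0]
  rcases eq_or_ne b ⊤ with rfl | hbt
  · have : (a + ⊤) / 2 = ⊤ := by simp [ENNReal.top_div, ENNReal.add_eq_top]
    rw [this]; simp [ENNReal.top_mul, ha0]
  -- finite case
  lift a to NNReal using hat
  lift b to NNReal using hbt
  rw [← ENNReal.coe_add, ← ENNReal.coe_ofNat, ← ENNReal.coe_div (by norm_num),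
    ← ENNReal.coe_mul, ← ENNReal.coe_mul, ENNReal.coe_le_coe,
    ← NNReal.coe_le_coe]
  push_cast
  nlinarith [sq_nonneg ((a:ℝ) - (b:ℝ)), NNReal.coe_nonneg a, NNReal.coe_nonneg b]

lemma isup_min_nat (a : ℝ≥0∞) : ⨆ n : ℕ, min a (n : ℝ≥0∞) = a := by
  apply le_antisymm (iSup_le fun n => min_le_left _ _)
  rcases eq_or_ne a ⊤ with rfl | hat
  · simp only [min_comm]
    calc (⊤:ℝ≥0∞) = ⨆ n : ℕ, (n : ℝ≥0∞) := (ENNReal.iSup_natCast).symm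
      _ ≤ _ := iSup_mono fun n => by simp
  · refine le_trans ?_ (le_iSup _ (⌈a.toReal⌉₊))
    have h : a ≤ (⌈a.toReal⌉₊ : ℝ≥0∞) := by
      conv_lhs => rw [← ENNReal.ofReal_toReal hat]
      calc ENNReal.ofReal a.toReal ≤ ENNReal.ofReal (⌈a.toReal⌉₊ : ℝ) :=
            ENNReal.ofReal_le_ofReal (Nat.le_ceil _)
        _ = (⌈a.toReal⌉₊ : ℝ≥0∞) := by simp [ENNReal.ofReal_natCast]
    rw [min_eq_left h]

lemma dim1_norm (f g h : ℝ → ℝ≥0∞) (hf : Measurable f) (hg : Measurable g)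
    (hh : Measurable h)
    (hf1 : ∀ x, f x ≤ 1) (hg1 : ∀ y, g y ≤ 1)
    (hfs : ∀ t : ℝ≥0∞, t < 1 → ∃ x, t < f x)
    (hgs : ∀ t : ℝ≥0∞, t < 1 → ∃ y, t < g y)
    (H : ∀ x y, f x * g y ≤ h ((x + y) / 2) * h ((x + y) / 2)) :
    (∫⁻ x, f x) + (∫⁻ y, g y) ≤ 2 * ∫⁻ z, h z := by
  classical
  set h1 : ℝ → ℝ≥0∞ := fun z => min (h z) 1 with hh1def
  have hh1 : Measurable h1 := hh.min measurable_const
  have hh1le : ∀ z, h1 z ≤ 1 := fun z => min_le_right _ _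
  set F : ℝ → ℝ := fun x => (f x).toReal with hF
  set G : ℝ → ℝ := fun y => (g y).toReal with hG
  set Hr : ℝ → ℝ := fun z => (h1 z).toReal with hHr
  have hFm : Measurable F := hf.ennreal_toReal
  have hGm : Measurable G := hg.ennreal_toReal
  have hHrm : Measurable Hr := hh1.ennreal_toReal
  have hfne : ∀ x, f x ≠ ⊤ := fun x => (lt_of_le_of_lt (hf1 x) (by simp)).ne
  have hgne : ∀ y, g y ≠ ⊤ := fun y => (lt_of_le_of_lt (hg1 y) (by simp)).ne
  have hh1ne : ∀ z, h1 z ≠ ⊤ := fun z => (lt_of_le_of_lt (hh1le z) (by simp)).ne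
  -- layer cake representations
  have lcf : ∫⁻ x, f x = ∫⁻ t in Ioi (0:ℝ), volume {x | t < F x} := by
    rw [← lintegral_eq_lintegral_meas_lt volume
      (Filter.Eventually.of_forall fun x => ENNReal.toReal_nonneg) hFm.aemeasurable]
    exact lintegral_congr fun x => (ENNReal.ofReal_toReal (hfne x)).symm
  have lcg : ∫⁻ y, g y = ∫⁻ t in Ioi (0:ℝ), volume {y | t < G y} := by
    rw [← lintegral_eq_lintegral_meas_lt volume
      (Filter.Eventually.of_forall fun x => ENNReal.toReal_nonneg) hGm.aemeasurable]
    exact lintegral_congr fun x => (ENNReal.ofReal_toReal (hgne x)).symm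
  have lch : ∫⁻ z, h1 z = ∫⁻ t in Ioi (0:ℝ), volume {z | t < Hr z} := by
    rw [← lintegral_eq_lintegral_meas_lt volume
      (Filter.Eventually.of_forall fun x => ENNReal.toReal_nonneg) hHrm.aemeasurable]
    exact lintegral_congr fun x => (ENNReal.ofReal_toReal (hh1ne x)).symm
  -- restrict f, g layer cake to (0,1)
  have hsplit : Ioi (0:ℝ) = Ioo (0:ℝ) 1 ∪ Ici (1:ℝ) := by
    ext x; simp only [mem_Ioi, mem_union, mem_Ioo, mem_Ici]; constructor
    · intro hx
      by_cases h1x : x < 1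
      · exact Or.inl ⟨hx, h1x⟩
      · exact Or.inr (le_of_not_gt h1x)
    · rintro (⟨hx, _⟩ | hx) <;> linarith
  have restrain : ∀ (φ : ℝ → ℝ) (hφ1 : ∀ x, φ x ≤ 1),
      ∫⁻ t in Ioi (0:ℝ), volume {x | t < φ x} = ∫⁻ t in Ioo (0:ℝ) 1, volume {x | t < φ x} := by
    intro φ hφ1
    rw [hsplit, lintegral_union measurableSet_Ici (by
      refine Set.disjoint_left.2 fun t ht ht' => ?_
      exact absurd ht.2 (not_lt.2 ht'))]
    have hz : ∀ t ∈ Ici (1:ℝ), volume {x | t < φ x} = (fun _ => (0:ℝ≥0∞)) t := by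
      intro t ht
      have he : {x | t < φ x} = ∅ := by
        ext x; simp only [mem_setOf_eq, mem_empty_iff_false, iff_false, not_lt]
        exact le_trans (hφ1 x) ht
      simp [he]
    have : ∫⁻ t in Ici (1:ℝ), volume {x | t < φ x} = 0 := by
      rw [setLIntegral_congr_fun measurableSet_Ici hz]
      simp
    rw [this, add_zero]
  have hF1x : ∀ x, F x ≤ 1 := fun x => by
    rw [hF]
    calc (f x).toReal ≤ (1:ℝ≥0∞).toReal := ENNReal.toReal_mono (by simp) (hf1 x)
      _ = 1 := by simp
  have hG1x : ∀ y, G y ≤ 1 := fun y => by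
    rw [hG]
    calc (g y).toReal ≤ (1:ℝ≥0∞).toReal := ENNReal.toReal_mono (by simp) (hg1 y)
      _ = 1 := by simp
  -- pointwise comparison of level-set measures on (0,1)
  have key : ∀ t ∈ Ioo (0:ℝ) 1,
      volume {x | t < F x} + volume {y | t < G y} ≤ 2 * volume {z | t < Hr z} := by
    intro t ht
    have ht0 : (0:ℝ) < t := ht.1
    have ht1 : t < 1 := ht.2
    have hoflt1 : ENNReal.ofReal t < 1 := by
      rw [← ENNReal.ofReal_one]; exact ENNReal.ofReal_lt_ofReal_iff (by norm_num) |>.2 ht1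
    set A := {x | t < F x} with hA
    set B := {y | t < G y} with hB
    set S := {z | t < Hr z} with hS
    have hAm : MeasurableSet A := measurableSet_lt measurable_const hFm
    have hBm : MeasurableSet B := measurableSet_lt measurable_const hGm
    have hSm : MeasurableSet S := measurableSet_lt measurable_const hHrm
    -- nonemptiness
    have hAne : A.Nonempty := by
      obtain ⟨x, hx⟩ := hfs (ENNReal.ofReal t) hoflt1
      exact ⟨x, (ENNReal.ofReal_lt_iff_lt_toReal ht0.le (hfne x)).1 hx⟩
    have hBne : B.Nonempty := by
      obtain ⟨y, hy⟩ := hgs (ENNReal.ofReal t) hoflt1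
      exact ⟨y, (ENNReal.ofReal_lt_iff_lt_toReal ht0.le (hgne y)).1 hy⟩
    -- target set
    set C : Set ℝ := (fun x : ℝ => (2:ℝ)⁻¹ * x) ⁻¹' S with hC
    have hCm : MeasurableSet C := hSm.preimage (measurable_const_mul _)
    have hvolC : volume C = 2 * volume S := by
      rw [hC, Real.volume_preimage_mul_left (by norm_num : (2:ℝ)⁻¹ ≠ 0)]
      norm_num
    have hsub : ∀ a ∈ A, ∀ b ∈ B, a + b ∈ C := by
      intro a ha b hb
      have hfa : ENNReal.ofReal t < f a :=
        (ENNReal.ofReal_lt_iff_lt_toReal ht0.le (hfne a)).2 ha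
      have hgb : ENNReal.ofReal t < g b :=
        (ENNReal.ofReal_lt_iff_lt_toReal ht0.le (hgne b)).2 hb
      have hm : ENNReal.ofReal t < h ((a + b) / 2) := by
        by_contra hcon
        push_neg at hcon
        have : h ((a+b)/2) * h ((a+b)/2) ≤ ENNReal.ofReal t * ENNReal.ofReal t :=
          mul_le_mul' hcon hcon
        have h2 : f a * g b ≤ ENNReal.ofReal t * ENNReal.ofReal t := le_trans (H a b) this
        have h3 : ENNReal.ofReal t * ENNReal.ofReal t < f a * g b :=
          ENNReal.mul_lt_mul hfa hgb
        exact absurd h2 (not_le.2 h3)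
      have hm1 : ENNReal.ofReal t < h1 ((a+b)/2) := lt_min hm hoflt1
      show t < Hr ((2:ℝ)⁻¹ * (a + b))
      have : (2:ℝ)⁻¹ * (a + b) = (a + b) / 2 := by ring
      rw [this]
      exact (ENNReal.ofReal_lt_iff_lt_toReal ht0.le (hh1ne _)).1 hm1
    calc volume A + volume B ≤ volume C := sumset_vol hAm hBm hCm hAne hBne hsub
      _ = 2 * volume S := hvolC
  -- measurability in t (antitone)
  have hanti : ∀ (φ : ℝ → ℝ), Antitone (fun t => volume {x | t < φ x}) := by
    intro φ t₁ t₂ hle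
    exact measure_mono fun x hx => lt_of_le_of_lt hle hx
  calc (∫⁻ x, f x) + (∫⁻ y, g y)
      = (∫⁻ t in Ioo (0:ℝ) 1, volume {x | t < F x})
        + ∫⁻ t in Ioo (0:ℝ) 1, volume {y | t < G y} := by
        rw [lcf, lcg, restrain F hF1x, restrain G hG1x]
    _ = ∫⁻ t in Ioo (0:ℝ) 1, (volume {x | t < F x} + volume {y | t < G y}) := by
        rw [lintegral_add_left ((hanti F).measurable)]
    _ ≤ ∫⁻ t in Ioo (0:ℝ) 1, 2 * volume {z | t < Hr z} := by
        refine setLIntegral_mono' measurableSet_Ioo key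
    _ = 2 * ∫⁻ t in Ioo (0:ℝ) 1, volume {z | t < Hr z} := by
        rw [lintegral_const_mul _ ((hanti Hr).measurable)]
    _ ≤ 2 * ∫⁻ t in Ioi (0:ℝ), volume {z | t < Hr z} := by
        gcongr
        exact (Ioo_subset_Ioi_self)
    _ = 2 * ∫⁻ z, h1 z := by rw [lch]
    _ ≤ 2 * ∫⁻ z, h z := by gcongr with z; exact min_le_left _ _

lemma dim1_bdd (f g h : ℝ → ℝ≥0∞) (hf : Measurable f) (hg : Measurable g)
    (hh : Measurable h)
    (hMf : (⨆ x, f x) ≠ ⊤) (hMg : (⨆ y, g y) ≠ ⊤)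
    (H : ∀ x y, f x * g y ≤ h ((x + y) / 2) * h ((x + y) / 2)) :
    (∫⁻ x, f x) * (∫⁻ y, g y) ≤ (∫⁻ z, h z) * (∫⁻ z, h z) := by
  set Mf := ⨆ x, f x with hMfdef
  set Mg := ⨆ y, g y with hMgdef
  rcases eq_or_ne Mf 0 with hMf0 | hMf0
  · have : ∀ x, f x = 0 := fun x => le_antisymm (hMf0 ▸ le_iSup f x) zero_le
    rw [lintegral_congr this]; simp
  rcases eq_or_ne Mg 0 with hMg0 | hMg0
  · have : ∀ y, g y = 0 := fun y => le_antisymm (hMg0 ▸ le_iSup g y) zero_le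
    rw [lintegral_congr (f := g) this]; simp
  have hMfMg0 : Mf * Mg ≠ 0 := mul_ne_zero hMf0 hMg0
  have hMfMgt : Mf * Mg ≠ ⊤ := ENNReal.mul_ne_top hMf hMg
  set c : ℝ≥0∞ := (Mf * Mg) ^ (1/2 : ℝ) with hcdef
  have hcc : c * c = Mf * Mg := by
    rw [hcdef, ← ENNReal.rpow_add_of_nonneg _ _ (by norm_num) (by norm_num)]
    norm_num
  have hc0 : c ≠ 0 := by
    intro hc; rw [hc, mul_zero] at hcc; exact hMfMg0 hcc.symm
  have hct : c ≠ ⊤ := by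
    intro hc; rw [hc, ENNReal.top_mul_top] at hcc; exact hMfMgt hcc.symm
  set f' : ℝ → ℝ≥0∞ := fun x => f x / Mf with hf'def
  set g' : ℝ → ℝ≥0∞ := fun y => g y / Mg with hg'def
  set h' : ℝ → ℝ≥0∞ := fun z => h z / c with hh'def
  have hf'm : Measurable f' := hf.div measurable_const
  have hg'm : Measurable g' := hg.div measurable_const
  have hh'm : Measurable h' := hh.div measurable_const
  have hf'1 : ∀ x, f' x ≤ 1 := fun x => by
    rw [hf'def]; exact (ENNReal.div_le_iff hMf0 hMf).2 (by rw [one_mul]; exact le_iSup f x)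
  have hg'1 : ∀ y, g' y ≤ 1 := fun y => by
    rw [hg'def]; exact (ENNReal.div_le_iff hMg0 hMg).2 (by rw [one_mul]; exact le_iSup g y)
  have hf's : ∀ t : ℝ≥0∞, t < 1 → ∃ x, t < f' x := by
    intro t ht
    have : t * Mf < Mf := by
      calc t * Mf < 1 * Mf := by
            exact ENNReal.mul_lt_mul_left hMf0 hMf ht
        _ = Mf := one_mul _
    obtain ⟨x, hx⟩ := lt_iSup_iff.1 (lt_of_lt_of_le this (le_of_eq hMfdef))
    exact ⟨x, (ENNReal.lt_div_iff_mul_lt (Or.inl hMf0) (Or.inl hMf)).2 hx⟩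
  have hg's : ∀ t : ℝ≥0∞, t < 1 → ∃ y, t < g' y := by
    intro t ht
    have : t * Mg < Mg := by
      calc t * Mg < 1 * Mg := by
            exact ENNReal.mul_lt_mul_left hMg0 hMg ht
        _ = Mg := one_mul _
    obtain ⟨y, hy⟩ := lt_iSup_iff.1 (lt_of_lt_of_le this (le_of_eq hMgdef))
    exact ⟨y, (ENNReal.lt_div_iff_mul_lt (Or.inl hMg0) (Or.inl hMg)).2 hy⟩
  have divdiv : ∀ (a b A B : ℝ≥0∞), A ≠ 0 → A ≠ ⊤ → B ≠ 0 → B ≠ ⊤ →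
      a / A * (b / B) = a * b / (A * B) := by
    intro a b A B h1 h2 h3 h4
    simp only [div_eq_mul_inv]
    rw [ENNReal.mul_inv (Or.inl h1) (Or.inl h2), mul_mul_mul_comm]
  have H' : ∀ x y, f' x * g' y ≤ h' ((x + y) / 2) * h' ((x + y) / 2) := by
    intro x y
    rw [hf'def, hg'def, hh'def]
    show f x / Mf * (g y / Mg) ≤ h ((x+y)/2) / c * (h ((x+y)/2) / c)
    rw [divdiv _ _ _ _ hMf0 hMf hMg0 hMg, divdiv _ _ _ _ hc0 hct hc0 hct, hcc]
    exact ENNReal.div_le_div_right (H x y) _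
  have key := dim1_norm f' g' h' hf'm hg'm hh'm hf'1 hg'1 hf's hg's H'
  have hif : ∫⁻ x, f' x = (∫⁻ x, f x) / Mf := by
    simp only [hf'def, div_eq_mul_inv]
    rw [lintegral_mul_const _ hf]
  have hig : ∫⁻ y, g' y = (∫⁻ y, g y) / Mg := by
    simp only [hg'def, div_eq_mul_inv]
    rw [lintegral_mul_const _ hg]
  have hih : ∫⁻ z, h' z = (∫⁻ z, h z) / c := by
    simp only [hh'def, div_eq_mul_inv]
    rw [lintegral_mul_const _ hh]
  rw [hif, hig, hih] at key
  -- now conclude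
  have step : (∫⁻ x, f x) / Mf * ((∫⁻ y, g y) / Mg)
      ≤ ((∫⁻ z, h z) / c) * ((∫⁻ z, h z) / c) := by
    calc (∫⁻ x, f x) / Mf * ((∫⁻ y, g y) / Mg)
        ≤ (((∫⁻ x, f x) / Mf + (∫⁻ y, g y) / Mg) / 2)
          * (((∫⁻ x, f x) / Mf + (∫⁻ y, g y) / Mg) / 2) := amgm _ _
      _ ≤ ((∫⁻ z, h z) / c) * ((∫⁻ z, h z) / c) := by
          have h2 : ((∫⁻ x, f x) / Mf + (∫⁻ y, g y) / Mg) / 2 ≤ (∫⁻ z, h z) / c := by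
            rw [ENNReal.div_le_iff (by norm_num) (by norm_num)]
            rw [mul_comm]
            exact key
          exact mul_le_mul' h2 h2
  have lhs_eq : (∫⁻ x, f x) / Mf * ((∫⁻ y, g y) / Mg)
      = ((∫⁻ x, f x) * (∫⁻ y, g y)) / (Mf * Mg) := divdiv _ _ _ _ hMf0 hMf hMg0 hMg
  have rhs_eq : ((∫⁻ z, h z) / c) * ((∫⁻ z, h z) / c)
      = ((∫⁻ z, h z) * (∫⁻ z, h z)) / (Mf * Mg) := by
    rw [divdiv _ _ _ _ hc0 hct hc0 hct, hcc]
  rw [lhs_eq, rhs_eq] at step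
  calc (∫⁻ x, f x) * (∫⁻ y, g y)
      = ((∫⁻ x, f x) * (∫⁻ y, g y)) / (Mf * Mg) * (Mf * Mg) :=
        (ENNReal.div_mul_cancel hMfMg0 hMfMgt).symm
    _ ≤ ((∫⁻ z, h z) * (∫⁻ z, h z)) / (Mf * Mg) * (Mf * Mg) :=
        mul_le_mul_left step _
    _ = (∫⁻ z, h z) * (∫⁻ z, h z) := ENNReal.div_mul_cancel hMfMg0 hMfMgt

lemma dim1 (f g h : ℝ → ℝ≥0∞) (hf : Measurable f) (hg : Measurable g)
    (hh : Measurable h)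
    (H : ∀ x y, f x * g y ≤ h ((x + y) / 2) * h ((x + y) / 2)) :
    (∫⁻ x, f x) * (∫⁻ y, g y) ≤ (∫⁻ z, h z) * (∫⁻ z, h z) := by
  have hfs : ∫⁻ x, f x = ⨆ n : ℕ, ∫⁻ x, min (f x) n := by
    rw [← lintegral_iSup (fun n => hf.min measurable_const)
      (fun n m hnm x => min_le_min le_rfl (by exact_mod_cast Nat.cast_le.2 hnm))]
    exact lintegral_congr fun x => (isup_min_nat (f x)).symm
  have hgs : ∫⁻ y, g y = ⨆ n : ℕ, ∫⁻ y, min (g y) n := by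
    rw [← lintegral_iSup (fun n => hg.min measurable_const)
      (fun n m hnm x => min_le_min le_rfl (by exact_mod_cast Nat.cast_le.2 hnm))]
    exact lintegral_congr fun y => (isup_min_nat (g y)).symm
  rw [hfs, hgs, ENNReal.iSup_mul]
  refine iSup_le fun n => ?_
  rw [ENNReal.mul_iSup]
  refine iSup_le fun m => ?_
  refine dim1_bdd _ _ h (hf.min measurable_const) (hg.min measurable_const) hh ?_ ?_ ?_
  · exact ne_top_of_le_ne_top (ENNReal.natCast_ne_top n) (iSup_le fun x => min_le_right _ _)
  · exact ne_top_of_le_ne_top (ENNReal.natCast_ne_top m) (iSup_le fun y => min_le_right _ _)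
  · intro x y
    exact le_trans (mul_le_mul' (min_le_left _ _) (min_le_left _ _)) (H x y)

lemma PL_pi : ∀ (n : ℕ) (f g h : (Fin n → ℝ) → ℝ≥0∞), Measurable f → Measurable g →
    Measurable h →
    (∀ x y, f x * g y ≤ h (fun i => (x i + y i) / 2) * h (fun i => (x i + y i) / 2)) →
    (∫⁻ x, f x) * (∫⁻ y, g y) ≤ (∫⁻ z, h z) * (∫⁻ z, h z) := by
  intro n
  induction n with
  | zero =>
    intro f g h hf hg hh H
    rw [lintegral_unique f, lintegral_unique g, lintegral_unique h]
    have huniv : volume (univ : Set (Fin 0 → ℝ)) = 1 := by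
      simp [volume_pi, Measure.pi_univ]
    rw [huniv]
    simp only [mul_one]
    have := H (default : Fin 0 → ℝ) (default : Fin 0 → ℝ)
    convert this using 3 <;> exact Subsingleton.elim _ _
  | succ n ih =>
    intro f g h hf hg hh H
    set e := MeasurableEquiv.piFinSuccAbove (fun _ : Fin (n+1) => ℝ) 0 with hedef
    have mp : MeasurePreserving e := volume_preserving_piFinSuccAbove (fun _ => ℝ) 0
    set F : ℝ × (Fin n → ℝ) → ℝ≥0∞ := f ∘ e.symm with hFdef
    set G : ℝ × (Fin n → ℝ) → ℝ≥0∞ := g ∘ e.symm with hGdef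
    set Hh : ℝ × (Fin n → ℝ) → ℝ≥0∞ := h ∘ e.symm with hHdef
    have hFm : Measurable F := hf.comp e.symm.measurable
    have hGm : Measurable G := hg.comp e.symm.measurable
    have hHm : Measurable Hh := hh.comp e.symm.measurable
    -- midpoint compatibility
    have emid : ∀ (c₁ c₂ : ℝ) (w₁ w₂ : Fin n → ℝ),
        e.symm ((c₁ + c₂) / 2, fun i => (w₁ i + w₂ i) / 2)
          = fun j => (e.symm (c₁, w₁) j + e.symm (c₂, w₂) j) / 2 := by
      intro c₁ c₂ w₁ w₂
      funext j
      show Fin.insertNth (α := fun _ : Fin (n+1) => ℝ) 0 ((c₁+c₂)/2) (fun i => (w₁ i + w₂ i)/2) j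
        = (Fin.insertNth (α := fun _ : Fin (n+1) => ℝ) 0 c₁ w₁ j
            + Fin.insertNth (α := fun _ : Fin (n+1) => ℝ) 0 c₂ w₂ j) / 2
      refine Fin.succAboveCases 0 ?_ ?_ j
      · simp
      · intro i; simp
    -- sections
    set Ff : ℝ → ℝ≥0∞ := fun s => ∫⁻ x, F (s, x) with hFfdef
    set Gg : ℝ → ℝ≥0∞ := fun t => ∫⁻ y, G (t, y) with hGgdef
    set Hs : ℝ → ℝ≥0∞ := fun r => ∫⁻ z, Hh (r, z) with hHsdef
    have hFfm : Measurable Ff := hFm.lintegral_prod_right'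
    have hGgm : Measurable Gg := hGm.lintegral_prod_right'
    have hHsm : Measurable Hs := hHm.lintegral_prod_right'
    have hsec : ∀ s t : ℝ, Ff s * Gg t ≤ Hs ((s + t) / 2) * Hs ((s + t) / 2) := by
      intro s t
      refine ih (fun x => F (s, x)) (fun y => G (t, y)) (fun z => Hh ((s+t)/2, z))
        (hFm.comp measurable_prodMk_left) (hGm.comp measurable_prodMk_left)
        (hHm.comp measurable_prodMk_left) ?_
      intro x y
      show f (e.symm (s, x)) * g (e.symm (t, y)) ≤ _
      have := H (e.symm (s, x)) (e.symm (t, y))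
      refine le_trans this (le_of_eq ?_)
      have : (fun i => (e.symm (s, x) i + e.symm (t, y) i) / 2)
          = e.symm ((s + t)/2, fun i => (x i + y i)/2) := (emid s t x y).symm
      rw [this]
      rfl
    have key := dim1 Ff Gg Hs hFfm hGgm hHsm hsec
    -- identify integrals
    have hiF : ∫⁻ s, Ff s = ∫⁻ x, f x := by
      rw [hFfdef]
      have : ∫⁻ u : ℝ × (Fin n → ℝ), F u = ∫⁻ s, ∫⁻ x, F (s, x) := by
        rw [Measure.volume_eq_prod ℝ (Fin n → ℝ), lintegral_prod _ hFm.aemeasurable]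
      rw [← this, hFdef]
      exact (mp.symm e).lintegral_comp hf
    have hiG : ∫⁻ t, Gg t = ∫⁻ y, g y := by
      rw [hGgdef]
      have : ∫⁻ u : ℝ × (Fin n → ℝ), G u = ∫⁻ t, ∫⁻ y, G (t, y) := by
        rw [Measure.volume_eq_prod ℝ (Fin n → ℝ), lintegral_prod _ hGm.aemeasurable]
      rw [← this, hGdef]
      exact (mp.symm e).lintegral_comp hg
    have hiH : ∫⁻ r, Hs r = ∫⁻ z, h z := by
      rw [hHsdef]
      have : ∫⁻ u : ℝ × (Fin n → ℝ), Hh u = ∫⁻ r, ∫⁻ z, Hh (r, z) := by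
        rw [Measure.volume_eq_prod ℝ (Fin n → ℝ), lintegral_prod _ hHm.aemeasurable]
      rw [← this, hHdef]
      exact (mp.symm e).lintegral_comp hh
    rw [hiF, hiG, hiH] at key
    exact key

lemma PL_euclidean {d : ℕ} (f g h : EuclideanSpace ℝ (Fin d) → ℝ≥0∞)
    (hf : Measurable f) (hg : Measurable g) (hh : Measurable h)
    (H : ∀ x y, f x * g y ≤ h ((1/2 : ℝ) • (x + y)) * h ((1/2 : ℝ) • (x + y))) :
    (∫⁻ x, f x) * (∫⁻ y, g y) ≤ (∫⁻ z, h z) * (∫⁻ z, h z) := by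
  set es := (MeasurableEquiv.toLp 2 (Fin d → ℝ)).symm with hesdef
  have mp : MeasurePreserving es := EuclideanSpace.volume_preserving_symm_measurableEquiv_toLp (Fin d)
  have hmid : ∀ x y : Fin d → ℝ,
      es.symm (fun i => (x i + y i) / 2) = (1/2 : ℝ) • (es.symm x + es.symm y) := by
    intro x y
    ext i
    simp [hesdef]
    ring
  have key := PL_pi d (f ∘ es.symm) (g ∘ es.symm) (h ∘ es.symm)
    (hf.comp es.symm.measurable) (hg.comp es.symm.measurable) (hh.comp es.symm.measurable) ?_
  · have h1 : ∫⁻ x, (f ∘ es.symm) x = ∫⁻ x, f x := (mp.symm es).lintegral_comp hf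
    have h2 : ∫⁻ x, (g ∘ es.symm) x = ∫⁻ x, g x := (mp.symm es).lintegral_comp hg
    have h3 : ∫⁻ x, (h ∘ es.symm) x = ∫⁻ x, h x := (mp.symm es).lintegral_comp hh
    rwa [h1, h2, h3] at key
  · intro x y
    show f (es.symm x) * g (es.symm y) ≤ _
    refine le_trans (H (es.symm x) (es.symm y)) (le_of_eq ?_)
    rw [show (fun i => (x i + y i) / 2) = fun i => (x i + y i)/2 from rfl]
    rw [← hmid x y]
    rfl

lemma measurable_expNegConj {d : ℕ} (φ : EuclideanSpace ℝ (Fin d) → ℝ) :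
    Measurable (expNegConj φ) := by
  apply measurable_of_Iio
  intro a
  have : expNegConj φ ⁻¹' Iio a
      = ⋃ y, {x | ENNReal.ofReal (Real.exp (φ y - (inner ℝ x y : ℝ))) < a} := by
    ext x
    simp only [mem_preimage, mem_Iio, expNegConj, iInf_lt_iff, mem_iUnion, mem_setOf_eq]
  rw [this]
  refine (isOpen_iUnion fun y => ?_).measurableSet
  have hcont : Continuous fun x : EuclideanSpace ℝ (Fin d) =>
      ENNReal.ofReal (Real.exp (φ y - (inner ℝ x y : ℝ))) :=
    ENNReal.continuous_ofReal.comp (Real.continuous_exp.comp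
      (continuous_const.sub (continuous_id.inner continuous_const)))
  exact isOpen_lt hcont continuous_const

lemma pointwise_PL {d : ℕ} (φ₀ φ₁ : EuclideanSpace ℝ (Fin d) → ℝ)
    (x y : EuclideanSpace ℝ (Fin d)) :
    expNegConj φ₀ x * expNegConj φ₁ y ≤
      expNegConj (fun z => (φ₀ z + φ₁ z) / 2) ((1/2 : ℝ) • (x + y))
        * expNegConj (fun z => (φ₀ z + φ₁ z) / 2) ((1/2 : ℝ) • (x + y)) := by
  set P := expNegConj φ₀ x * expNegConj φ₁ y with hP
  set m := (1/2 : ℝ) • (x + y) with hm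
  have hhalf : expNegConj (fun z => (φ₀ z + φ₁ z) / 2) m ≥ P ^ (1/2 : ℝ) := by
    refine le_iInf fun z => ?_
    have hinner : (inner ℝ m z : ℝ) = ((inner ℝ x z : ℝ) + (inner ℝ y z : ℝ)) / 2 := by
      rw [hm, real_inner_smul_left, inner_add_left]; ring
    have hexp : (fun z => (φ₀ z + φ₁ z) / 2) z - (inner ℝ m z : ℝ)
        = ((φ₀ z - (inner ℝ x z : ℝ)) + (φ₁ z - (inner ℝ y z : ℝ))) / 2 := by
      rw [hinner]; ring
    set u := φ₀ z - (inner ℝ x z : ℝ) with hu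
    set v := φ₁ z - (inner ℝ y z : ℝ) with hv
    have hsplit : Real.exp ((u + v) / 2)
        = (Real.exp u * Real.exp v) ^ (1/2 : ℝ) := by
      rw [← Real.exp_add, ← Real.exp_mul]
      ring_nf
    calc P ^ (1/2 : ℝ)
        = (expNegConj φ₀ x) ^ (1/2 : ℝ) * (expNegConj φ₁ y) ^ (1/2 : ℝ) := by
          rw [hP, ENNReal.mul_rpow_of_nonneg _ _ (by norm_num)]
      _ ≤ (ENNReal.ofReal (Real.exp u)) ^ (1/2 : ℝ)
            * (ENNReal.ofReal (Real.exp v)) ^ (1/2 : ℝ) := by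
          refine mul_le_mul' (ENNReal.rpow_le_rpow ?_ (by norm_num))
            (ENNReal.rpow_le_rpow ?_ (by norm_num))
          · exact iInf_le _ z
          · exact iInf_le _ z
      _ = ENNReal.ofReal (Real.exp ((u + v) / 2)) := by
          rw [hsplit, ← ENNReal.ofReal_rpow_of_pos (mul_pos (Real.exp_pos u) (Real.exp_pos v)),
            ENNReal.ofReal_mul (Real.exp_pos u).le,
            ENNReal.mul_rpow_of_nonneg _ _ (by norm_num)]
      _ = ENNReal.ofReal (Real.exp ((fun z => (φ₀ z + φ₁ z) / 2) z - (inner ℝ m z : ℝ))) := by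
          rw [hexp]
  calc P = P ^ (1/2 : ℝ) * P ^ (1/2 : ℝ) := by
        rw [← ENNReal.rpow_add_of_nonneg _ _ (by norm_num) (by norm_num)]
        norm_num
    _ ≤ _ := mul_le_mul' hhalf hhalf



end PLaux

/-- `J_μ` is midpoint concave along linear interpolation of convex
functions: for convex `φ₀, φ₁` and `φ_{1/2} = (φ₀ + φ₁)/2`,
`J_μ(φ_{1/2}) ≥ (1/2) J_μ(φ₀) + (1/2) J_μ(φ₁)`. -/
theorem stmt13 {d : ℕ} (μ : Measure (EuclideanSpace ℝ (Fin d)))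
    [IsProbabilityMeasure μ] (hmom : Integrable (fun x => ‖x‖) μ)
    (φ₀ φ₁ : EuclideanSpace ℝ (Fin d) → ℝ)
    (hc0 : ConvexOn ℝ Set.univ φ₀) (hc1 : ConvexOn ℝ Set.univ φ₁)
    (hi0 : Integrable φ₀ μ) (hi1 : Integrable φ₁ μ)
    (hpos0 : 0 < ∫⁻ x, expNegConj φ₀ x) (hfin0 : ∫⁻ x, expNegConj φ₀ x < ⊤)
    (hpos1 : 0 < ∫⁻ x, expNegConj φ₁ x) (hfin1 : ∫⁻ x, expNegConj φ₁ x < ⊤)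
    (hfinh : ∫⁻ x, expNegConj (fun z => (φ₀ z + φ₁ z) / 2) x < ⊤) :
    (1 / 2) * Jfun μ φ₀ + (1 / 2) * Jfun μ φ₁ ≤
      Jfun μ (fun z => (φ₀ z + φ₁ z) / 2) := by
  set I₀ := ∫⁻ x, expNegConj φ₀ x with hI0
  set I₁ := ∫⁻ x, expNegConj φ₁ x with hI1
  set Ih := ∫⁻ x, expNegConj (fun z => (φ₀ z + φ₁ z) / 2) x with hIh
  have key : I₀ * I₁ ≤ Ih * Ih :=
    PL_euclidean _ _ _ (measurable_expNegConj φ₀) (measurable_expNegConj φ₁)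
      (measurable_expNegConj _) (pointwise_PL φ₀ φ₁)
  have hIhpos : 0 < Ih := by
    rcases eq_or_lt_of_le (show (0:ℝ≥0∞) ≤ Ih from zero_le) with h | h
    · exfalso
      have : I₀ * I₁ = 0 := le_antisymm (by rw [← h] at key; simpa using key) zero_le
      rcases mul_eq_zero.1 this with h0 | h0
      · exact absurd h0 hpos0.ne'
      · exact absurd h0 hpos1.ne'
    · exact h
  set a := I₀.toReal with ha
  set b := I₁.toReal with hb
  set c := Ih.toReal with hc
  have hapos : 0 < a := ENNReal.toReal_pos hpos0.ne' hfin0.ne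
  have hbpos : 0 < b := ENNReal.toReal_pos hpos1.ne' hfin1.ne
  have hcpos : 0 < c := ENNReal.toReal_pos hIhpos.ne' hfinh.ne
  have hab : a * b ≤ c * c := by
    have := ENNReal.toReal_mono (ENNReal.mul_ne_top hfinh.ne hfinh.ne) key
    rwa [ENNReal.toReal_mul, ENNReal.toReal_mul] at this
  have hlog : Real.log a + Real.log b ≤ Real.log c + Real.log c := by
    calc Real.log a + Real.log b = Real.log (a * b) :=
          (Real.log_mul hapos.ne' hbpos.ne').symm
      _ ≤ Real.log (c * c) := Real.log_le_log (by positivity) hab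
      _ = Real.log c + Real.log c := Real.log_mul hcpos.ne' hcpos.ne'
  have hint : ∫ z, (φ₀ z + φ₁ z) / 2 ∂μ = ((∫ z, φ₀ z ∂μ) + ∫ z, φ₁ z ∂μ) / 2 := by
    rw [← integral_add hi0 hi1]
    exact integral_div 2 _
  simp only [Jfun, ← hI0, ← hI1, ← hIh, ← ha, ← hb, ← hc, hint]
  linarith
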